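/- Let Y/X be an abelian cover of multigraphs with automorphism group G and covering map π. Then Pr(Y)^G = cor(Pr(X)); that is, the G-invariant principal divisors of Y are exactly the images under cor of the principal divisors of X. -/

import Mathlib

/-!  Multigraphs in the Serre formalism: a finite vertex set `V`, a finite set
`D` of darts (oriented edges / half-edges) together with a fixed-point-free
involution `inv` (reversing orientation) and a map `head` assigning to each
dart its terminal vertex.  Edges are the orbits of `inv`; loops and multiple
edges are allowed.  -/
structure Multigraph where
  V : Type
  D : Type
  [fintypeV : Fintype V]
  [fintypeD : Fintype D]
  [decEqV : DecidableEq V]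
  [decEqD : DecidableEq D]
  inv : D → D
  head : D → V
  inv_inv : ∀ d, inv (inv d) = d
  inv_ne : ∀ d, inv d ≠ d

namespace Multigraph

attribute [instance] Multigraph.fintypeV Multigraph.fintypeD Multigraph.decEqV Multigraph.decEqD

variable (Z : Multigraph)

/-- the initial vertex of a dart -/
def tail (d : Z.D) : Z.V := Z.head (Z.inv d)

/-- the number of edges `|E|`: each edge consists of exactly two darts -/
def numEdges : ℕ := Fintype.card Z.D / 2

/-- the degree (valency) of a vertex: the number of darts with head `v`;
loops automatically count twice -/
def degree (v : Z.V) : ℕ := (Finset.univ.filter fun d : Z.D => Z.head d = v).card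

/-- the number of darts with tail `v` and head `w`.  For `v ≠ w` this is the
number of edges joining `v` and `w`; for `v = w` it is twice the number of
loops at `v`. -/
def numDarts (v w : Z.V) : ℕ :=
  (Finset.univ.filter fun d : Z.D => Z.tail d = v ∧ Z.head d = w).card

/-- the number of loops at a vertex -/
def numLoops (v : Z.V) : ℕ := Z.numDarts v v / 2

/-- the number of edges between two (distinct) vertices -/
def numEdgesBetween (v w : Z.V) : ℕ := Z.numDarts v w

def Adj (v w : Z.V) : Prop := ∃ d : Z.D, Z.tail d = v ∧ Z.head d = w

/-- a multigraph is connected if it is nonempty and any two vertices are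
joined by a path -/
def Connected : Prop := Nonempty Z.V ∧ ∀ v w : Z.V, Relation.ReflTransGen Z.Adj v w

/-- no vertices of degree one -/
def NoDegreeOne : Prop := ∀ v : Z.V, Z.degree v ≠ 1

/-- adjacency using only darts from `T` -/
def AdjOn (T : Finset Z.D) (v w : Z.V) : Prop := ∃ d ∈ T, Z.tail d = v ∧ Z.head d = w

/-- A spanning tree, described by its (inv-closed) set of darts: it is
connected, spans all vertices, and has `|V| - 1` edges (i.e. `2(|V|-1)`
darts); a connected spanning subgraph with `|V| - 1` edges is exactly a
spanning tree. -/
def IsSpanningTree (T : Finset Z.D) : Prop :=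
  (∀ d ∈ T, Z.inv d ∈ T) ∧ (∀ v w : Z.V, Relation.ReflTransGen (Z.AdjOn T) v w) ∧
    T.card = 2 * (Fintype.card Z.V - 1)

/-- `κ_Z`, the number of spanning trees of `Z` -/
noncomputable def kappa : ℕ := Nat.card {T : Finset Z.D // Z.IsSpanningTree T}

/-- the adjacency matrix: the diagonal entry at `v` is twice the number of
loops at `v`, the off-diagonal entry at `(v, w)` is the number of edges
joining `v` and `w` -/
def adjMatrix : Matrix Z.V Z.V ℤ := Matrix.of fun v w => (Z.numDarts v w : ℤ)

/-- the diagonal degree matrix -/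
def degMatrix : Matrix Z.V Z.V ℤ := Matrix.diagonal fun v => (Z.degree v : ℤ)

/-- `r_Z = |E_Z| - |V_Z| + 1` -/
def r : ℕ := Z.numEdges + 1 - Fintype.card Z.V

/-- the reciprocal `ζ_Z(u)⁻¹` of the Ihara zeta function, defined through the
three-term determinant formula
`ζ_Z(u)⁻¹ = (1 - u²)^(r-1) · det (I - A u + (D - I) u²)`;
it is a polynomial in `u`. -/
noncomputable def zetaInv : Polynomial ℚ :=
  (1 - Polynomial.X ^ 2) ^ (Z.r - 1) *
    Matrix.det
      ((1 : Matrix Z.V Z.V (Polynomial ℚ)) -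
        (Polynomial.X : Polynomial ℚ) • Z.adjMatrix.map (fun a => (a : Polynomial ℚ)) +
        ((Polynomial.X : Polynomial ℚ) ^ 2) • (Z.degMatrix - 1).map (fun a => (a : Polynomial ℚ)))

/-- `ρ_w(w₀)`: the Laplacian entries -/
def rho (w w0 : Z.V) : ℤ :=
  if w = w0 then (Z.degree w0 : ℤ) - 2 * (Z.numLoops w0 : ℤ)
  else -(Z.numEdgesBetween w w0 : ℤ)

/-- the divisor `φ(w₀) = ∑_w ρ_w(w₀) · w` -/
noncomputable def lapDiv (w0 : Z.V) : Z.V →₀ ℤ :=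
  ∑ w : Z.V, Finsupp.single w (Z.rho w w0)

/-- the Laplacian map `φ : Div(Z) → Div(Z)`, on `Div(Z) = Z.V →₀ ℤ`,
sending `w₀` to `∑_w ρ_w(w₀) · w` -/
noncomputable def lap : (Z.V →₀ ℤ) →ₗ[ℤ] Z.V →₀ ℤ :=
  Finsupp.lsum ℤ fun w0 => LinearMap.toSpanSingleton ℤ _ (Z.lapDiv w0)

/-- the degree map `deg : Div(Z) → ℤ` -/
noncomputable def divDeg : (Z.V →₀ ℤ) →ₗ[ℤ] ℤ :=
  Finsupp.lsum ℤ fun _ => (LinearMap.id : ℤ →ₗ[ℤ] ℤ)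

/-- `Div⁰(Z)`, the divisors of degree zero -/
noncomputable def divZero : Submodule ℤ (Z.V →₀ ℤ) := LinearMap.ker Z.divDeg

/-- `Pr(Z)`, the principal divisors: the image of the Laplacian map -/
noncomputable def prin : Submodule ℤ (Z.V →₀ ℤ) := LinearMap.range Z.lap

end Multigraph

/-- A covering map of multigraphs: maps on vertices and darts commuting with
the structure maps which are local isomorphisms (bijections on stars). -/
structure CoveringMap (Y X : Multigraph) where
  vmap : Y.V → X.V
  dmap : Y.D → X.D
  head_map : ∀ d, X.head (dmap d) = vmap (Y.head d)
  inv_map : ∀ d, X.inv (dmap d) = dmap (Y.inv d)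
  vmap_surj : Function.Surjective vmap
  star_bij : ∀ w : Y.V, Set.BijOn dmap {d | Y.head d = w} {d | X.head d = vmap w}

/-- A Galois (regular) cover of multigraphs `Y/X` with automorphism group `G`:
a covering map together with an action of `G` on `Y` by automorphisms of the
cover which is free and transitive on each vertex fiber (so `G` is identified
with the deck transformation group `Aut(Y/X)`). -/
structure GaloisCover (Y X : Multigraph) (G : Type) [Group G] extends CoveringMap Y X where
  actV : G →* Equiv.Perm Y.V
  actD : G →* Equiv.Perm Y.D
  act_head : ∀ g d, Y.head (actD g d) = actV g (Y.head d)
  act_inv : ∀ g d, Y.inv (actD g d) = actD g (Y.inv d)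
  vmap_act : ∀ g w, vmap (actV g w) = vmap w
  dmap_act : ∀ g d, dmap (actD g d) = dmap d
  act_free : ∀ g w, actV g w = w → g = 1
  fiber_trans : ∀ w w' : Y.V, vmap w = vmap w' → ∃ g : G, actV g w = w'

/-- the first non-vanishing Taylor coefficient of a polynomial `p` at `u = 1` -/
noncomputable def leadingCoeffAtOne {K : Type} [Field K] (p : Polynomial K) : K :=
  (Polynomial.taylor 1 p).coeff (p.rootMultiplicity 1)

/-- the idempotent `e_χ = |G|⁻¹ ∑_σ χ(σ) σ⁻¹` of `ℂ[G]` attached to a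
character `χ` of a finite abelian group `G` -/
noncomputable def charIdem {G : Type} [CommGroup G] [Fintype G] (χ : G →* ℂ) :
    MonoidAlgebra ℂ G :=
  (Fintype.card G : ℂ)⁻¹ • ∑ σ : G, χ σ • MonoidAlgebra.single σ⁻¹ (1 : ℂ)

/-- the complex-conjugate character `χ̄` -/
noncomputable def conjChar {G : Type} [CommGroup G] (χ : G →* ℂ) : G →* ℂ :=
  (starRingEnd ℂ).toMonoidHom.comp χ

/-- `e = 1 - e_{χ₁}` where `χ₁` is the trivial character -/
noncomputable def eAug (G : Type) [CommGroup G] [Fintype G] : MonoidAlgebra ℂ G :=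
  1 - charIdem (1 : G →* ℂ)

/-- the augmentation ideal `I_G = ker(s : ℤ[G] → ℤ)`, as an additive
subgroup of `ℤ[G]` -/
noncomputable def augIdeal (G : Type) [CommGroup G] : AddSubgroup (MonoidAlgebra ℤ G) :=
  AddMonoidHom.ker
    (((Finsupp.lsum ℤ fun _ : G => (LinearMap.id : ℤ →ₗ[ℤ] ℤ)).toAddMonoidHom.comp
      MonoidAlgebra.coeffAddEquiv.toAddMonoidHom :
      MonoidAlgebra ℤ G →+ ℤ))

namespace GaloisCover

variable {Y X : Multigraph} {G : Type} [CommGroup G] [Fintype G] (C : GaloisCover Y X G)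

/-- the matrix `A(σ)`, relative to a choice `s` of one vertex `s v` of `Y` in
the fiber of each vertex `v` of `X`: its `(v, v')` entry is twice the number
of loops at `s v` when `v = v'` and `σ = 1`, and otherwise the number of
edges connecting `s v` to `σ · s v'`. -/
noncomputable def Asigma (s : X.V → Y.V) (σ : G) : Matrix X.V X.V ℤ :=
  Matrix.of fun v v' => (Y.numDarts (s v) (C.actV σ (s v')) : ℤ)

/-- `A_χ = ∑_σ χ(σ) A(σ)` -/
noncomputable def Achi (s : X.V → Y.V) (χ : G →* ℂ) : Matrix X.V X.V ℂ :=
  ∑ σ : G, χ σ • (C.Asigma s σ).map fun a => (a : ℂ)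

/-- the reciprocal `L_{Y/X}(u,χ)⁻¹` of the Artin-Ihara L-function, defined
through the three-term determinant formula
`L_{Y/X}(u,χ)⁻¹ = (1 - u²)^(r_X - 1) · det (I - A_χ u + (D - I) u²)`. -/
noncomputable def LInv (s : X.V → Y.V) (χ : G →* ℂ) : Polynomial ℂ :=
  (1 - Polynomial.X ^ 2) ^ (X.r - 1) *
    Matrix.det
      ((1 : Matrix X.V X.V (Polynomial ℂ)) -
        (Polynomial.X : Polynomial ℂ) • (C.Achi s χ).map Polynomial.C +
        ((Polynomial.X : Polynomial ℂ) ^ 2) • (X.degMatrix - 1).map fun a => (a : Polynomial ℂ))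

/-- `θ*_{Y/X}(1) = ∑_χ L*_{Y/X}(1,χ) e_{χ̄} ∈ ℂ[G]` (a finite sum over all
the characters of `G`) -/
noncomputable def thetaStar (s : X.V → Y.V) : MonoidAlgebra ℂ G :=
  ∑ᶠ χ : G →* ℂ, leadingCoeffAtOne (C.LInv s χ) • charIdem (conjChar χ)

/-- `ℓ_{w_i} : Div(Y) → ℤ[G]`, on a vertex `w`: `∑_σ ρ_{w_i}(σ·w) σ⁻¹`
(here `w_i = s v`) -/
noncomputable def ell (s : X.V → Y.V) (v : X.V) (w : Y.V) : MonoidAlgebra ℤ G :=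
  ∑ σ : G, Y.rho (s v) (C.actV σ w) • MonoidAlgebra.single (σ⁻¹ : G) (1 : ℤ)

/-- the `ℤ[G]`-linear extension of `ell` to `Div(Y)` -/
noncomputable def ellD (s : X.V → Y.V) (v : X.V) (Dv : Y.V →₀ ℤ) : MonoidAlgebra ℤ G :=
  Finsupp.sum Dv fun w c => c • C.ell s v w

/-- `det_{ℤ[G]}(φ)`: the determinant of the `ℤ[G]`-linear Laplacian `φ` on the
free `ℤ[G]`-module `Div(Y) = ⊕ᵢ ℤ[G]·wᵢ`, computed in the basis `(wᵢ)ᵢ`,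
i.e. the determinant of the matrix `(ℓ_{w_i}(w_j))_{i,j}`. -/
noncomputable def lapDet (s : X.V → Y.V) : MonoidAlgebra ℤ G :=
  Matrix.det (Matrix.of fun v v' => C.ell s v (s v'))

/-- the action of an element of `ℤ[G]` on `Div(Y)` -/
noncomputable def smulDiv (x : MonoidAlgebra ℤ G) (Dv : Y.V →₀ ℤ) : Y.V →₀ ℤ :=
  Finsupp.sum x.coeff fun σ c => c • Finsupp.mapDomain (C.actV σ) Dv

/-- the action of an element of `ℂ[G]` on `Div(Y) ⊗ ℂ` -/
noncomputable def smulDivC (x : MonoidAlgebra ℂ G) (Dv : Y.V →₀ ℂ) : Y.V →₀ ℂ :=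
  Finsupp.sum x.coeff fun σ c => c • Finsupp.mapDomain (C.actV σ) Dv

/-- `res : Div(Y) → Div(X)`, sending a vertex `w` to `π(w)` -/
noncomputable def res (Dv : Y.V →₀ ℤ) : X.V →₀ ℤ := Finsupp.mapDomain C.vmap Dv

/-- `cor : Div(X) → Div(Y)`, sending a vertex `v` to `∑_{w ∈ π⁻¹(v)} w` -/
noncomputable def cor (Dv : X.V →₀ ℤ) : Y.V →₀ ℤ :=
  Finsupp.equivFunOnFinite.symm fun w => Dv (C.vmap w)

/-- the norm element `N_G = ∑_σ σ` acting on `Div(Y)` -/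
noncomputable def normMap : (Y.V →₀ ℤ) →ₗ[ℤ] Y.V →₀ ℤ :=
  ∑ σ : G, Finsupp.lmapDomain ℤ ℤ (C.actV σ)

end GaloisCover

/-- An intermediate cover of a Galois cover `Y/X`, corresponding to a subgroup
`H ≤ G = Aut(Y/X)`: a multigraph `Z` (the quotient `Y/H`) which is at the
same time a Galois cover of which `Y` is a Galois `H`-cover (with the action
of `H` being the restriction of that of `G`) and a cover of `X`, compatibly
with the covering `Y → X`. -/
structure IntermediateCover {Y X : Multigraph} {G : Type} [Group G]
    (C : GaloisCover Y X G) (H : Subgroup G) where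
  Z : Multigraph
  upper : GaloisCover Y Z ↥H
  lower : CoveringMap Z X
  actV_compat : ∀ (h : ↥H) (w : Y.V), upper.actV h w = C.actV (h : G) w
  actD_compat : ∀ (h : ↥H) (d : Y.D), upper.actD h d = C.actD (h : G) d
  vmap_compat : ∀ w : Y.V, lower.vmap (upper.vmap w) = C.vmap w
  dmap_compat : ∀ d : Y.D, lower.dmap (upper.dmap d) = C.dmap d


section AuxiliaryLemmas

open Finset

namespace Multigraph

variable (Z : Multigraph)

lemma tail_inv' (d : Z.D) : Z.tail (Z.inv d) = Z.head d := by
  simp [Multigraph.tail, Z.inv_inv]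

lemma lapDiv_apply (w0 w : Z.V) : Z.lapDiv w0 w = Z.rho w w0 := by
  classical
  rw [Multigraph.lapDiv, Finsupp.finset_sum_apply]
  simp [Finsupp.single_apply]

lemma lap_apply (M : Z.V →₀ ℤ) (w : Z.V) :
    Z.lap M w = ∑ w0 : Z.V, Z.rho w w0 * M w0 := by
  classical
  rw [Multigraph.lap, Finsupp.lsum_apply, Finsupp.sum_apply, Finsupp.sum_fintype]
  · refine Finset.sum_congr rfl fun w0 _ => ?_
    rw [LinearMap.toSpanSingleton_apply, Finsupp.smul_apply, Z.lapDiv_apply, smul_eq_mul,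
      mul_comm]
  · intro i; simp

lemma even_numDarts_self (w : Z.V) : Even (Z.numDarts w w) := by
  classical
  rw [Multigraph.numDarts]
  set S : Finset Z.D := univ.filter fun d => Z.tail d = w ∧ Z.head d = w with hS
  have hmem : ∀ a ∈ S, Z.inv a ∈ S := by
    intro d hd
    simp only [hS, mem_filter, mem_univ, true_and] at hd ⊢
    exact ⟨by rw [Z.tail_inv', hd.2], hd.1⟩
  have h0 : ∑ _d ∈ S, (1 : ZMod 2) = 0 :=
    Finset.sum_involution (fun d _ => Z.inv d) (fun a _ => by decide)
      (fun a _ _ => Z.inv_ne a) hmem (fun a _ => Z.inv_inv a)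
  have h1 : ((S.card : ZMod 2)) = 0 := by
    rw [← h0, Finset.sum_const, nsmul_eq_mul, mul_one]
  rw [even_iff_two_dvd]
  exact (ZMod.natCast_eq_zero_iff _ 2).mp h1

lemma rho_eq_ite (w w0 : Z.V) :
    Z.rho w w0 = (if w = w0 then (Z.degree w0 : ℤ) else 0) - (Z.numDarts w w0 : ℤ) := by
  rw [Multigraph.rho]
  by_cases h : w = w0
  · subst h
    obtain ⟨k, hk⟩ := Z.even_numDarts_self w
    have hl : Z.numLoops w = k := by rw [Multigraph.numLoops, hk]; omega
    rw [if_pos rfl, if_pos rfl, hl, hk]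
    push_cast
    ring
  · rw [if_neg h, if_neg h, Multigraph.numEdgesBetween, zero_sub]

lemma sum_head_tail (f : Z.V → ℤ) (w : Z.V) :
    ∑ d ∈ univ.filter (fun d => Z.head d = w), f (Z.tail d)
      = ∑ d ∈ univ.filter (fun d => Z.tail d = w), f (Z.head d) := by
  classical
  refine Finset.sum_nbij' Z.inv Z.inv ?_ ?_ ?_ ?_ ?_
  · intro a ha; simp only [mem_filter, mem_univ, true_and] at ha ⊢
    rw [Z.tail_inv', ha]
  · intro a ha; simp only [mem_filter, mem_univ, true_and] at ha ⊢
    exact ha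
  · intro a _; exact Z.inv_inv a
  · intro a _; exact Z.inv_inv a
  · intro a _; rfl

lemma sum_tail_fiber (f : Z.V → ℤ) (w : Z.V) :
    ∑ d ∈ univ.filter (fun d => Z.tail d = w), f (Z.head d)
      = ∑ w0 : Z.V, (Z.numDarts w w0 : ℤ) * f w0 := by
  classical
  rw [← Finset.sum_fiberwise_of_maps_to (g := Z.head) (t := (univ : Finset Z.V))
    (fun d _ => mem_univ _) (fun d => f (Z.head d))]
  refine Finset.sum_congr rfl fun w0 _ => ?_
  have hfe : ((univ.filter fun d => Z.tail d = w).filter fun d => Z.head d = w0)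
      = univ.filter fun d => Z.tail d = w ∧ Z.head d = w0 := by
    rw [Finset.filter_filter]
  rw [Finset.sum_congr rfl (fun d hd => by
      rw [(Finset.mem_filter.mp hd).2] : ∀ d ∈ (univ.filter fun d => Z.tail d = w).filter
        (fun d => Z.head d = w0), f (Z.head d) = f w0),
    Finset.sum_const, hfe, Multigraph.numDarts, nsmul_eq_mul]

lemma lap_apply_darts (M : Z.V →₀ ℤ) (w : Z.V) :
    Z.lap M w = ∑ d ∈ univ.filter (fun d => Z.head d = w), (M w - M (Z.tail d)) := by
  classical
  rw [Z.lap_apply, Finset.sum_sub_distrib, Z.sum_head_tail, Z.sum_tail_fiber,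
    Finset.sum_const]
  have h1 : ∀ w0 : Z.V, Z.rho w w0 * M w0
      = (if w = w0 then (Z.degree w0 : ℤ) * M w0 else 0) - (Z.numDarts w w0 : ℤ) * M w0 := by
    intro w0
    rw [Z.rho_eq_ite]
    by_cases h : w = w0 <;> simp [h] <;> ring
  rw [Finset.sum_congr rfl fun w0 _ => h1 w0, Finset.sum_sub_distrib,
    Finset.sum_ite_eq univ w (fun w0 => (Z.degree w0 : ℤ) * M w0), if_pos (mem_univ w)]
  rw [Multigraph.degree, nsmul_eq_mul]

/-- A divisor in the kernel of the Laplacian of a connected multigraph is constant. -/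
lemma lap_eq_zero_const {Z : Multigraph} (hconn : Z.Connected) {M : Z.V →₀ ℤ}
    (h : Z.lap M = 0) (v w : Z.V) : M v = M w := by
  classical
  obtain ⟨u0⟩ := hconn.1
  obtain ⟨wm, _, hmax⟩ := Finset.exists_max_image (univ : Finset Z.V) (fun u => M u) ⟨u0, mem_univ u0⟩
  have key : ∀ u, Relation.ReflTransGen Z.Adj u wm → M u = M wm := by
    intro u hu
    induction hu using Relation.ReflTransGen.head_induction_on with
    | refl => rfl
    | head hadj _ ih =>
      rename_i a c _
      obtain ⟨d, hdt, hdh⟩ := hadj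
      have hz : ∑ d ∈ univ.filter (fun d => Z.head d = c), (M c - M (Z.tail d)) = 0 := by
        rw [← Z.lap_apply_darts, h]; rfl
      have hnn : ∀ d ∈ univ.filter (fun d => Z.head d = c), 0 ≤ M c - M (Z.tail d) := by
        intro d _
        have := hmax (Z.tail d) (mem_univ _)
        omega
      have hall := (Finset.sum_eq_zero_iff_of_nonneg hnn).mp hz
      have hd : d ∈ univ.filter (fun d => Z.head d = c) := by
        simp [hdh]
      have := hall d hd
      rw [hdt] at this
      omega
  rw [key v (hconn.2 v wm), key w (hconn.2 w wm)]

end Multigraph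

namespace GaloisCover

variable {Y X : Multigraph} {G : Type} [CommGroup G] [Fintype G] (C : GaloisCover Y X G)

lemma cor_apply (Dv : X.V →₀ ℤ) (w : Y.V) : C.cor Dv w = Dv (C.vmap w) := by
  simp [GaloisCover.cor]

lemma tail_dmap (d : Y.D) : X.tail (C.dmap d) = C.vmap (Y.tail d) := by
  rw [Multigraph.tail, C.inv_map, C.head_map]; rfl

lemma tail_act (σ : G) (d : Y.D) : Y.tail (C.actD σ d) = C.actV σ (Y.tail d) := by
  rw [Multigraph.tail, C.act_inv, C.act_head]; rfl

lemma lap_cor (Q : X.V →₀ ℤ) : Y.lap (C.cor Q) = C.cor (X.lap Q) := by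
  classical
  ext w
  rw [Y.lap_apply_darts, C.cor_apply (X.lap Q) w, X.lap_apply_darts]
  refine Finset.sum_bij (fun d _ => C.dmap d) ?_ ?_ ?_ ?_
  · intro a ha
    simp only [Finset.mem_filter, Finset.mem_univ, true_and] at ha ⊢
    rw [C.head_map, ha]
  · intro a ha b hb hab
    simp only [Finset.mem_filter, Finset.mem_univ, true_and] at ha hb
    exact (C.star_bij w).injOn ha hb hab
  · intro b hb
    simp only [Finset.mem_filter, Finset.mem_univ, true_and] at hb
    obtain ⟨a, ha, hab⟩ := (C.star_bij w).surjOn hb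
    exact ⟨a, by simpa using ha, hab⟩
  · intro a ha
    simp only [Finset.mem_filter, Finset.mem_univ, true_and] at ha
    rw [C.cor_apply, C.cor_apply, C.tail_dmap]

lemma lap_mapDomain (σ : G) (M : Y.V →₀ ℤ) :
    Y.lap (Finsupp.mapDomain (C.actV σ) M) = Finsupp.mapDomain (C.actV σ) (Y.lap M) := by
  classical
  have hinvV : ∀ u, C.actV σ⁻¹ u = (C.actV σ).symm u := by
    intro u; rw [map_inv]; rfl
  have hDinv : ∀ d, C.actD σ (C.actD σ⁻¹ d) = d := by
    intro d
    rw [← Equiv.Perm.mul_apply, ← map_mul, mul_inv_cancel, map_one, Equiv.Perm.one_apply]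
  have hDinv' : ∀ d, C.actD σ⁻¹ (C.actD σ d) = d := by
    intro d
    rw [← Equiv.Perm.mul_apply, ← map_mul, inv_mul_cancel, map_one, Equiv.Perm.one_apply]
  ext w
  rw [Finsupp.mapDomain_equiv_apply, Y.lap_apply_darts, Y.lap_apply_darts]
  refine Finset.sum_nbij' (C.actD σ⁻¹) (C.actD σ) ?_ ?_ ?_ ?_ ?_
  · intro a ha
    simp only [Finset.mem_filter, Finset.mem_univ, true_and] at ha ⊢
    rw [C.act_head, ha, hinvV]
  · intro a ha
    simp only [Finset.mem_filter, Finset.mem_univ, true_and] at ha ⊢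
    rw [C.act_head, ha, Equiv.apply_symm_apply]
  · intro a _; exact hDinv a
  · intro a _; exact hDinv' a
  · intro a ha
    simp only [Finset.mem_filter, Finset.mem_univ, true_and] at ha
    rw [Finsupp.mapDomain_equiv_apply, Finsupp.mapDomain_equiv_apply, C.tail_act,
      hinvV]

lemma sum_values_mapDomain (e : Equiv.Perm Y.V) (M : Y.V →₀ ℤ) :
    ∑ w : Y.V, Finsupp.mapDomain (⇑e) M w = ∑ w : Y.V, M w := by
  simp only [Finsupp.mapDomain_equiv_apply]
  exact Equiv.sum_comp e.symm (fun w => M w)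

lemma mapDomain_cor (σ : G) (Dv : X.V →₀ ℤ) :
    Finsupp.mapDomain (C.actV σ) (C.cor Dv) = C.cor Dv := by
  ext w
  rw [Finsupp.mapDomain_equiv_apply, C.cor_apply, C.cor_apply]
  have h := C.vmap_act σ ((C.actV σ).symm w)
  rw [Equiv.apply_symm_apply] at h
  rw [← h]

end GaloisCover

end AuxiliaryLemmas

/-- For an abelian cover `Y/X` with automorphism group `G`,
one has `Pr(Y)^G = cor(Pr(X))`: a divisor of `Y` is a `G`-invariant principal
divisor if and only if it is the image under `cor` of a principal divisor of
`X`. -/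
theorem prin_invariants_eq_cor_of_prin (X Y : Multigraph)
    (hXconn : X.Connected) (hXdeg : X.NoDegreeOne)
    (hYconn : Y.Connected) (hYdeg : Y.NoDegreeOne)
    {G : Type} [CommGroup G] [Fintype G] (C : GaloisCover Y X G) :
    ∀ P : Y.V →₀ ℤ,
      ((∃ M : Y.V →₀ ℤ, P = Y.lap M) ∧
        ∀ σ : G, Finsupp.mapDomain (C.actV σ) P = P) ↔
      ∃ Q : X.V →₀ ℤ, P = C.cor (X.lap Q) := by
  intro P
  constructor
  · rintro ⟨⟨M, rfl⟩, hinv⟩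
    -- Step 1: `M` itself is `G`-invariant.
    have hMinv : ∀ σ : G, Finsupp.mapDomain (C.actV σ) M = M := by
      intro σ
      set D : Y.V →₀ ℤ := Finsupp.mapDomain (C.actV σ) M - M with hD
      have h1 : Y.lap D = 0 := by
        rw [hD, map_sub, C.lap_mapDomain, hinv σ, sub_self]
      have hc := Multigraph.lap_eq_zero_const hYconn h1
      have hs : ∑ w : Y.V, D w = 0 := by
        simp only [hD, Finsupp.sub_apply, Finset.sum_sub_distrib]
        rw [GaloisCover.sum_values_mapDomain (C.actV σ) M, sub_self]
      obtain ⟨w0⟩ := hYconn.1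
      have hzero : D w0 = 0 := by
        rw [Finset.sum_congr rfl (fun w _ => hc w w0), Finset.sum_const] at hs
        have hcard : 0 < Fintype.card Y.V := Fintype.card_pos_iff.mpr ⟨w0⟩
        rw [Finset.card_univ, nsmul_eq_mul] at hs
        have : (Fintype.card Y.V : ℤ) ≠ 0 := by exact_mod_cast hcard.ne'
        exact (mul_eq_zero.mp hs).resolve_left this
      have hDzero : D = 0 := by
        ext w
        rw [hc w w0, hzero]; rfl
      exact sub_eq_zero.mp hDzero
    -- Step 2: an invariant divisor is a corestriction.
    set s : X.V → Y.V := Function.surjInv C.vmap_surj with hsdef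
    have hs : ∀ v, C.vmap (s v) = v := fun v => Function.surjInv_eq C.vmap_surj v
    set E : X.V →₀ ℤ := Finsupp.equivFunOnFinite.symm (fun v => M (s v)) with hE
    have hEapp : ∀ v, E v = M (s v) := by
      intro v; simp [hE]
    have hcorE : C.cor E = M := by
      ext w
      rw [C.cor_apply, hEapp]
      obtain ⟨σ, hσ⟩ := C.fiber_trans (s (C.vmap w)) w (by rw [hs])
      have h2 := congrArg (fun F : Y.V →₀ ℤ => F (C.actV σ (s (C.vmap w)))) (hMinv σ)
      rw [Finsupp.mapDomain_equiv_apply, Equiv.symm_apply_apply, hσ] at h2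
      exact h2
    exact ⟨E, by rw [← C.lap_cor, hcorE]⟩
  · rintro ⟨Q, rfl⟩
    refine ⟨⟨C.cor Q, (C.lap_cor Q).symm⟩, fun σ => C.mapDomain_cor σ _⟩
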